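/- For each n ∈ ℕ let f_n : ℝ → [0,1] be strictly monotone with f_n(x) → 0 as x → +∞ and f_n(x) → 1 as x → −∞, and suppose that for each δ > 0 the sequence (f_n) converges uniformly to the indicator function 1_{(−∞,0]} on the set {x : |x| ≥ δ}. Let (X_n) be real-valued random variables such that for each r ∈ ℝ, lim_{n→∞} E[f_n(X_n − r)] = p(r), where p is a continuous probability distribution function on ℝ. Then for every r ∈ ℝ, lim_{n→∞} P(X_n ≤ r) = p(r); i.e., X_n converges in distribution to a random variable with distribution function p. -/

import Mathlib

open Filter MeasureTheory

/-- Lemma 4.1.39 of Borodin–Corwin: if `fₙ : ℝ → [0,1]` are strictly monotone, converge to `0`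
at `+∞` and to `1` at `-∞`, and converge uniformly to the indicator of `(-∞, 0]` away from any
neighbourhood of `0`, and if `E[fₙ(Xₙ - r)] → p(r)` for every `r`, where `p` is a continuous
probability distribution function, then `P(Xₙ ≤ r) → p(r)` for every `r`. -/
theorem tendsto_prob_of_tendsto_expectation
    (f : ℕ → ℝ → ℝ)
    (hf_mem : ∀ n x, f n x ∈ Set.Icc (0 : ℝ) 1)
    (hf_mono : ∀ n, StrictMono (f n) ∨ StrictAnti (f n))
    (hf_top : ∀ n, Tendsto (f n) atTop (nhds 0))
    (hf_bot : ∀ n, Tendsto (f n) atBot (nhds 1))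
    (hf_unif : ∀ δ : ℝ, 0 < δ →
      TendstoUniformlyOn f (Set.indicator (Set.Iic 0) fun _ => (1 : ℝ)) atTop
        {x : ℝ | δ ≤ |x|})
    (Ω : ℕ → Type*) (inst : ∀ n, MeasurableSpace (Ω n))
    (μ : ∀ n, Measure (Ω n)) (hμ : ∀ n, IsProbabilityMeasure (μ n))
    (X : ∀ n, Ω n → ℝ) (hX : ∀ n, Measurable (X n))
    (p : ℝ → ℝ)
    (hp_mem : ∀ r, p r ∈ Set.Icc (0 : ℝ) 1)
    (hp_mono : Monotone p) (hp_cont : Continuous p)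
    (hp_bot : Tendsto p atBot (nhds 0)) (hp_top : Tendsto p atTop (nhds 1))
    (hlim : ∀ r : ℝ,
      Tendsto (fun n => ∫ ω, f n (X n ω - r) ∂(μ n)) atTop (nhds (p r))) :
    ∀ r : ℝ,
      Tendsto (fun n => ((μ n) {ω | X n ω ≤ r}).toReal) atTop (nhds (p r)) := by
  intro r
  have hfm : ∀ n, Measurable (f n) := fun n =>
    (hf_mono n).elim (fun h => h.monotone.measurable) (fun h => h.antitone.measurable)
  have hint : ∀ n (c : ℝ), Integrable (fun ω => f n (X n ω - c)) (μ n) := by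
    intro n c
    haveI := hμ n
    refine (integrable_const (1 : ℝ)).mono'
      (((hfm n).comp ((hX n).sub measurable_const)).aestronglyMeasurable) ?_
    filter_upwards with ω
    rw [Real.norm_eq_abs, abs_le]
    exact ⟨by linarith [(hf_mem n (X n ω - c)).1], (hf_mem n (X n ω - c)).2⟩
  have hA : ∀ n, MeasurableSet {ω | X n ω ≤ r} := fun n =>
    measurableSet_le (hX n) measurable_const
  have ha01 : ∀ n, ((μ n) {ω | X n ω ≤ r}).toReal ∈ Set.Icc (0 : ℝ) 1 := by
    intro n
    haveI := hμ n
    constructor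
    · exact ENNReal.toReal_nonneg
    · exact ENNReal.toReal_le_of_le_ofReal one_pos.le (by simpa using prob_le_one)
  rw [Metric.tendsto_nhds]
  intro ε hε
  obtain ⟨δ, hδpos, hδ⟩ := Metric.continuous_iff.mp hp_cont r (ε / 4) (by positivity)
  set δ' := δ / 2 with hδ'def
  have hδ'pos : 0 < δ' := by positivity
  have hpu : dist (p (r + δ')) (p r) < ε / 4 := by
    apply hδ
    rw [Real.dist_eq]
    rw [hδ'def]; rw [abs_of_pos (by linarith)]; linarith
  have hpl : dist (p (r - δ')) (p r) < ε / 4 := by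
    apply hδ
    rw [Real.dist_eq]
    rw [hδ'def]
    rw [abs_of_nonpos (by linarith)]; linarith
  have H1 := (Metric.tendstoUniformlyOn_iff.mp (hf_unif δ' hδ'pos)) (ε / 4) (by positivity)
  have H2 : ∀ᶠ n in atTop,
      dist (∫ ω, f n (X n ω - (r + δ')) ∂(μ n)) (p (r + δ')) < ε / 4 :=
    Metric.tendsto_nhds.mp (hlim (r + δ')) (ε / 4) (by positivity)
  have H3 : ∀ᶠ n in atTop,
      dist (∫ ω, f n (X n ω - (r - δ')) ∂(μ n)) (p (r - δ')) < ε / 4 :=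
    Metric.tendsto_nhds.mp (hlim (r - δ')) (ε / 4) (by positivity)
  filter_upwards [H1, H2, H3] with n hn1 hn2 hn3
  haveI := hμ n
  set a := ((μ n) {ω | X n ω ≤ r}).toReal with ha
  -- upper bound : (1 - ε/4) * a ≤ ∫ f n (X n ω - (r + δ'))
  have hup : (1 - ε / 4) * a ≤ ∫ ω, f n (X n ω - (r + δ')) ∂(μ n) := by
    have hpt : ∀ ω, Set.indicator {ω | X n ω ≤ r} (fun _ => (1 - ε / 4)) ω
        ≤ f n (X n ω - (r + δ')) := by
      intro ω
      by_cases hω : X n ω ≤ r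
      · rw [Set.indicator_of_mem (show ω ∈ {ω' | X n ω' ≤ r} from hω)]
        have hx : X n ω - (r + δ') ≤ -δ' := by linarith
        have hmem : X n ω - (r + δ') ∈ {x : ℝ | δ' ≤ |x|} := by
          simp only [Set.mem_setOf_eq]
          rw [abs_of_nonpos (by linarith)]; linarith
        have := hn1 _ hmem
        rw [Set.indicator_of_mem (show X n ω - (r + δ') ∈ Set.Iic 0 by
          simp only [Set.mem_Iic]; linarith)] at this
        rw [Real.dist_eq] at this
        have := abs_lt.mp this
        linarith [this.2]
      · rw [Set.indicator_of_notMem (show ω ∉ {ω' | X n ω' ≤ r} from hω)]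
        exact (hf_mem n _).1
    have hI : Integrable (Set.indicator {ω | X n ω ≤ r} (fun _ => (1 - ε / 4))) (μ n) :=
      (integrable_const (1 - ε / 4)).indicator (hA n)
    calc (1 - ε / 4) * a
        = ∫ ω, Set.indicator {ω | X n ω ≤ r} (fun _ => (1 - ε / 4)) ω ∂(μ n) := by
          rw [integral_indicator_const _ (hA n)]
          simp [ha, mul_comm, measureReal_def]
      _ ≤ _ := integral_mono hI (hint n (r + δ')) hpt
  -- lower bound : ∫ f n (X n ω - (r - δ')) ≤ a + ε/4
  have hlo : (∫ ω, f n (X n ω - (r - δ')) ∂(μ n)) ≤ a + ε / 4 := by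
    have hpt : ∀ ω, f n (X n ω - (r - δ'))
        ≤ Set.indicator {ω | X n ω ≤ r} (fun _ => (1 : ℝ)) ω + ε / 4 := by
      intro ω
      by_cases hω : X n ω ≤ r
      · rw [Set.indicator_of_mem (show ω ∈ {ω' | X n ω' ≤ r} from hω)]
        have := (hf_mem n (X n ω - (r - δ'))).2
        linarith
      · rw [Set.indicator_of_notMem (show ω ∉ {ω' | X n ω' ≤ r} from hω)]
        push_neg at hω
        have hx : δ' ≤ X n ω - (r - δ') := by linarith
        have hmem : X n ω - (r - δ') ∈ {x : ℝ | δ' ≤ |x|} := by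
          simp only [Set.mem_setOf_eq]
          rw [abs_of_pos (by linarith)]; linarith
        have := hn1 _ hmem
        rw [Set.indicator_of_notMem (show X n ω - (r - δ') ∉ Set.Iic 0 by
          simp only [Set.mem_Iic]; push_neg; linarith)] at this
        rw [Real.dist_eq] at this
        have := abs_lt.mp this
        linarith [this.1]
    have hI : Integrable (fun ω => Set.indicator {ω | X n ω ≤ r} (fun _ => (1 : ℝ)) ω + ε / 4)
        (μ n) := ((integrable_const (1 : ℝ)).indicator (hA n)).add (integrable_const _)
    calc (∫ ω, f n (X n ω - (r - δ')) ∂(μ n))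
        ≤ ∫ ω, (Set.indicator {ω | X n ω ≤ r} (fun _ => (1 : ℝ)) ω + ε / 4) ∂(μ n) :=
          integral_mono (hint n (r - δ')) hI hpt
      _ = a + ε / 4 := by
          rw [integral_add ((integrable_const (1 : ℝ)).indicator (hA n)) (integrable_const _),
            integral_indicator_const _ (hA n), integral_const]
          simp [ha, measureReal_def]
  have h2 := abs_lt.mp (Real.dist_eq _ _ ▸ hn2)
  have h3 := abs_lt.mp (Real.dist_eq _ _ ▸ hn3)
  have hu := abs_lt.mp (Real.dist_eq _ _ ▸ hpu)
  have hl := abs_lt.mp (Real.dist_eq _ _ ▸ hpl)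
  have ha0 := (ha01 n).1
  have ha1 := (ha01 n).2
  rw [Real.dist_eq, abs_lt]
  constructor
  · nlinarith [h2.1, h2.2, hu.1, hu.2]
  · nlinarith [h3.1, h3.2, hl.1, hl.2]
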